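/- Let s_b > 0, s_i > 0 and μ_i < μ_b be real numbers, and define I(x_b, x_i) = (x_b − μ_b)²/(2 s_b) + (x_i − μ_i)²/(2 s_i). Then inf over all pairs (x_b, x_i) ∈ ℝ² with x_b ≤ x_i of I(x_b, x_i) equals inf over x ∈ [μ_i, μ_b] of I(x, x), and both infima equal (μ_b − μ_i)² / (2 (s_b + s_i)). -/

import Mathlib

/-- The infimum of the two-dimensional Gaussian rate function over `{x_b ≤ x_i}` equals
the infimum of its diagonal restriction over `[μ_i, μ_b]`, and both equal
`(μ_b − μ_i)² / (2(s_b + s_i))`. -/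
theorem stmt_7
    (sb si μi μb : ℝ) (hsb : 0 < sb) (hsi : 0 < si) (h : μi < μb)
    (I : ℝ → ℝ → ℝ)
    (hI : ∀ xb xi, I xb xi = (xb - μb) ^ 2 / (2 * sb) + (xi - μi) ^ 2 / (2 * si)) :
    (⨅ p : {p : ℝ × ℝ // p.1 ≤ p.2}, I p.1.1 p.1.2)
        = (⨅ x : Set.Icc μi μb, I (x : ℝ) (x : ℝ))
      ∧ (⨅ p : {p : ℝ × ℝ // p.1 ≤ p.2}, I p.1.1 p.1.2)
        = (μb - μi) ^ 2 / (2 * (sb + si)) := by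
  have hs : 0 < sb + si := by linarith
  set c : ℝ := (μb - μi) ^ 2 / (2 * (sb + si)) with hc
  set xs : ℝ := (si * μb + sb * μi) / (sb + si) with hxs
  have hxs_mem : xs ∈ Set.Icc μi μb := by
    constructor
    · rw [hxs, le_div_iff₀ hs]; nlinarith
    · rw [hxs, div_le_iff₀ hs]; nlinarith
  haveI : Nonempty {p : ℝ × ℝ // p.1 ≤ p.2} := ⟨⟨(xs, xs), le_rfl⟩⟩
  haveI : Nonempty (Set.Icc μi μb) := ⟨⟨xs, hxs_mem⟩⟩
  have hlow : ∀ xb xi : ℝ, xb ≤ xi → c ≤ I xb xi := by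
    intro xb xi hle
    rw [hI, hc, div_add_div _ _ (by positivity : (2*sb) ≠ 0) (by positivity : (2*si) ≠ 0),
      div_le_div_iff₀ (by positivity) (by positivity)]
    nlinarith [sq_nonneg (si * (xb - μb) + sb * (xi - μi)), mul_pos hsb hsi,
      mul_nonneg (mul_pos hsb hsi).le
        (mul_nonneg (sub_nonneg.mpr hle) (by linarith : (0:ℝ) ≤ (xi - μi) - (xb - μb) + (μb - μi)))]
  have hval : I xs xs = c := by
    rw [hI, hc, hxs]
    field_simp
    ring
  have h2 : (⨅ p : {p : ℝ × ℝ // p.1 ≤ p.2}, I p.1.1 p.1.2) = c := by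
    apply le_antisymm
    · calc (⨅ p : {p : ℝ × ℝ // p.1 ≤ p.2}, I p.1.1 p.1.2)
          ≤ I xs xs := ciInf_le (f := fun p : {p : ℝ × ℝ // p.1 ≤ p.2} => I p.1.1 p.1.2) ⟨c, by rintro y ⟨p, rfl⟩; exact hlow p.1.1 p.1.2 p.2⟩
            ⟨(xs, xs), le_refl xs⟩
      _ = c := hval
    · exact le_ciInf fun p => hlow p.1.1 p.1.2 p.2
  have h1 : (⨅ x : Set.Icc μi μb, I (x : ℝ) (x : ℝ)) = c := by
    apply le_antisymm
    · calc (⨅ x : Set.Icc μi μb, I (x : ℝ) (x : ℝ))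
          ≤ I xs xs := ciInf_le (f := fun x : Set.Icc μi μb => I (x : ℝ) (x : ℝ)) ⟨c, by rintro y ⟨x, rfl⟩; exact hlow x x le_rfl⟩ ⟨xs, hxs_mem⟩
      _ = c := hval
    · exact le_ciInf fun x => hlow x x le_rfl
  exact ⟨h2.trans h1.symm, h2⟩
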